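/- Let H be a smooth (locally Lipschitz) vector field on a manifold N and p : (α, β) → N a maximal integral curve of H. If there exists q ∈ N with p(t) → q as t → β, then β = +∞ and H(q) = 0. -/

import Mathlib

open Set

/-- Time-reversed Grönwall estimate: for two solutions of the same autonomous ODE staying in a
set on which the vector field is Lipschitz, the distance at an earlier time is controlled by the
distance at a later time. -/
lemma dist_le_rev_aux {E : Type*} [NormedAddCommGroup E] [NormedSpace ℝ E]
    {W : E → E} {K : NNReal} {s : Set E} (hv : LipschitzOnWith K W s)
    {f g : ℝ → E} {a b : ℝ}
    (hf' : ∀ t ∈ Icc a b, HasDerivAt f (W (f t)) t) (hfs : ∀ t ∈ Icc a b, f t ∈ s)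
    (hg' : ∀ t ∈ Icc a b, HasDerivAt g (W (g t)) t) (hgs : ∀ t ∈ Icc a b, g t ∈ s)
    (hab : a ≤ b) :
    dist (f a) (g a) ≤ dist (f b) (g b) * Real.exp (K * (b - a)) := by
  have hv' : ∀ t : ℝ, LipschitzOnWith K (fun x => -(W x)) s := by
    intro t
    rw [← one_mul K]
    exact LipschitzWith.id.neg.comp_lipschitzOnWith hv
  have hmem : ∀ t ∈ Icc (-b) (-a), -t ∈ Icc a b := by
    intro t ht
    exact ⟨le_neg.mpr ht.2, neg_le.mpr ht.1⟩
  have hFd : ∀ t ∈ Icc (-b) (-a), HasDerivAt (f ∘ Neg.neg) (-(W (f (-t)))) t := by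
    intro t ht
    have h1 := hf' (-t) (hmem t ht)
    have h2 : HasDerivAt (fun x : ℝ => -x) (-1) t := (hasDerivAt_id t).neg
    have := h1.scomp t h2
    simpa [neg_one_smul] using this
  have hGd : ∀ t ∈ Icc (-b) (-a), HasDerivAt (g ∘ Neg.neg) (-(W (g (-t)))) t := by
    intro t ht
    have h1 := hg' (-t) (hmem t ht)
    have h2 : HasDerivAt (fun x : ℝ => -x) (-1) t := (hasDerivAt_id t).neg
    have := h1.scomp t h2
    simpa [neg_one_smul] using this
  have key := dist_le_of_trajectories_ODE_of_mem (v := fun _ x => -(W x)) (s := fun _ => s)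
    (K := K) (f := f ∘ Neg.neg) (g := g ∘ Neg.neg) (a := -b) (b := -a)
    (δ := dist (f b) (g b))
    (fun t _ => hv' t)
    (fun t ht => ((hFd t ht).continuousAt).continuousWithinAt)
    (fun t ht => (hFd t (Ico_subset_Icc_self ht)).hasDerivWithinAt)
    (fun t ht => hfs (-t) (hmem t (Ico_subset_Icc_self ht)))
    (fun t ht => ((hGd t ht).continuousAt).continuousWithinAt)
    (fun t ht => (hGd t (Ico_subset_Icc_self ht)).hasDerivWithinAt)
    (fun t ht => hgs (-t) (hmem t (Ico_subset_Icc_self ht)))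
    (by simp)
  have := key (-a) ⟨neg_le_neg hab, le_refl _⟩
  simpa [sub_neg_eq_add, neg_add_eq_sub] using this

/-- If `p : (α, β) → N` is a maximal integral curve of a locally Lipschitz vector
field `H` and `p t → q ∈ N` as `t → β`, then `β = ∞` and `H q = 0`. -/
theorem stmt_6 {E : Type*} [NormedAddCommGroup E] [NormedSpace ℝ E] [CompleteSpace E]
    (H : E → E) (hH : LocallyLipschitz H)
    (α : ℝ) (β : EReal) (hαβ : (α : EReal) < β)
    (p : ℝ → E)
    (hp : ∀ t : ℝ, α < t → (t : EReal) < β → HasDerivAt p (H (p t)) t)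
    (hmax : ∀ (β' : EReal) (γ : ℝ → E), β < β' →
      (∀ t : ℝ, α < t → (t : EReal) < β' → HasDerivAt γ (H (γ t)) t) →
      ¬ (∀ t : ℝ, α < t → (t : EReal) < β → γ t = p t))
    (q : E)
    (hq : ∀ ε : ℝ, 0 < ε → ∃ T : ℝ, α < T ∧ (T : EReal) < β ∧
      ∀ t : ℝ, T < t → (t : EReal) < β → ‖p t - q‖ < ε) :
    β = ⊤ ∧ H q = 0 := by
  -- Step 1 : β = ⊤
  have hβtop : β = ⊤ := by
    by_contra hβt
    have hβbot : β ≠ ⊥ := fun h => by simp [h] at hαβ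
    lift β to ℝ using ⟨hβt, hβbot⟩ with b hb
    have hαb : α < b := by exact_mod_cast hαβ
    -- local Lipschitz data at q
    obtain ⟨K, sn, hsn, hlip⟩ := hH q
    obtain ⟨R₁, hR₁, hball⟩ := Metric.mem_nhds_iff.mp hsn
    set R : ℝ := R₁ / 2 with hRdef
    have hR0 : 0 < R := by positivity
    have hsub : Metric.closedBall q R ⊆ sn :=
      (Metric.closedBall_subset_ball (by linarith)).trans hball
    have hlipR : LipschitzOnWith K H (Metric.closedBall q R) := hlip.mono hsub
    set C : ℝ := ‖H q‖ + K * R with hCdef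
    have hC0 : 0 ≤ C := by positivity
    have hnorm : ∀ x ∈ Metric.closedBall q R, ‖H x‖ ≤ C := by
      intro x hx
      have h1 : dist (H x) (H q) ≤ K * dist x q :=
        hlipR.dist_le_mul x hx q (Metric.mem_closedBall_self hR0.le)
      have h2 : dist x q ≤ R := Metric.mem_closedBall.mp hx
      have h3 : ‖H x‖ ≤ ‖H q‖ + dist (H x) (H q) := by
        rw [dist_eq_norm]
        have := norm_add_le (H q) (H x - H q)
        simpa using this
      have hK0 : (0:ℝ) ≤ K := K.coe_nonneg
      nlinarith [mul_le_mul_of_nonneg_left h2 hK0]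
    set ε : ℝ := R / (C + 1) with hεdef
    have hε0 : 0 < ε := by positivity
    -- Picard–Lindelöf at (b, q)
    have hpl : IsPicardLindelof (fun _ : ℝ => H) (tmin := b - ε) (tmax := b + ε)
        ⟨b, by constructor <;> linarith⟩ q ⟨R, hR0.le⟩ 0 ⟨C, hC0⟩ K :=
      { lipschitzOnWith := fun t _ => hlipR
        continuousOn := fun x _ => continuousOn_const
        norm_le := fun t _ x hx => hnorm x hx
        mul_max_le := by
          change C * max ((b + ε) - b) (b - (b - ε)) ≤ R - 0
          have h1 : max ((b + ε) - b) (b - (b - ε)) = ε := by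
            simp
          rw [h1, sub_zero]
          have hC1 : (0:ℝ) < C + 1 := by linarith
          calc C * ε = R * (C / (C + 1)) := by rw [hεdef]; ring
            _ ≤ R * 1 := by
                apply mul_le_mul_of_nonneg_left _ hR0.le
                exact (div_le_one hC1).mpr (by linarith)
            _ = R := by ring }
    obtain ⟨σ, hσb, hσ⟩ := hpl.exists_eq_forall_mem_Icc_hasDerivWithinAt₀
    replace hσb : σ b = q := hσb
    have hσd : ∀ u ∈ Ioo (b - ε) (b + ε), HasDerivAt σ (H (σ u)) u := fun u hu =>
      (hσ u (Ioo_subset_Icc_self hu)).hasDerivAt (Icc_mem_nhds hu.1 hu.2)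
    have hσcont : ContinuousAt σ b :=
      (hσd b ⟨by linarith, by linarith⟩).differentiableAt.continuousAt
    obtain ⟨δ₁, hδ₁0, hδ₁⟩ := Metric.continuousAt_iff.mp hσcont R hR0
    obtain ⟨T, hTα, hTβ, hT⟩ := hq R hR0
    have hTb : T < b := by exact_mod_cast hTβ
    set a₀ : ℝ := max (max α T) (max (b - ε) (b - δ₁)) with ha₀def
    have ha₀b : a₀ < b := by
      simp only [ha₀def, max_lt_iff]
      exact ⟨⟨hαb, hTb⟩, ⟨by linarith, by linarith⟩⟩
    have ha₀α : α ≤ a₀ := le_trans (le_max_left _ _) (le_max_left _ _)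
    have ha₀T : T ≤ a₀ := le_trans (le_max_right _ _) (le_max_left _ _)
    have ha₀ε : b - ε ≤ a₀ := le_trans (le_max_left _ _) (le_max_right _ _)
    have ha₀δ : b - δ₁ ≤ a₀ := le_trans (le_max_right _ _) (le_max_right _ _)
    -- p and σ agree on (a₀, b)
    have heq : ∀ t ∈ Ioo a₀ b, p t = σ t := by
      intro t ht
      have key : ∀ t₂ ∈ Ico t b,
          dist (p t) (σ t) ≤ dist (p t₂) (σ t₂) * Real.exp (K * (t₂ - t)) := by
        intro t₂ ht₂
        apply dist_le_rev_aux hlipR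
        · intro u hu
          exact hp u (lt_of_le_of_lt ha₀α (lt_of_lt_of_le ht.1 hu.1))
            (by exact_mod_cast lt_of_le_of_lt hu.2 ht₂.2)
        · intro u hu
          have : ‖p u - q‖ < R :=
            hT u (lt_of_le_of_lt ha₀T (lt_of_lt_of_le ht.1 hu.1))
              (by exact_mod_cast lt_of_le_of_lt hu.2 ht₂.2)
          simpa [Metric.mem_closedBall, dist_eq_norm] using this.le
        · intro u hu
          exact hσd u ⟨lt_of_le_of_lt ha₀ε (lt_of_lt_of_le ht.1 hu.1),
            by linarith [hu.2, ht₂.2]⟩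
        · intro u hu
          have hub : u < b := lt_of_le_of_lt hu.2 ht₂.2
          have hdub : dist u b < δ₁ := by
            rw [Real.dist_eq, abs_sub_lt_iff]
            constructor
            · linarith
            · have : b - δ₁ < u := lt_of_le_of_lt ha₀δ (lt_of_lt_of_le ht.1 hu.1)
              linarith
          have := hδ₁ hdub
          rw [hσb] at this
          simpa [Metric.mem_closedBall] using this.le
        · exact ht₂.1
      have hdist0 : dist (p t) (σ t) ≤ 0 := by
        apply le_of_forall_pos_le_add
        intro η hη
        set M : ℝ := Real.exp (K * (b - t)) with hMdef
        have hM0 : 0 < M := Real.exp_pos _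
        set c : ℝ := η / M with hcdef
        have hc0 : 0 < c := by positivity
        obtain ⟨T₂, hT₂α, hT₂β, hT₂⟩ := hq (c / 2) (by positivity)
        have hT₂b : T₂ < b := by exact_mod_cast hT₂β
        obtain ⟨δ₂, hδ₂0, hδ₂⟩ := Metric.continuousAt_iff.mp hσcont (c / 2) (by positivity)
        set m : ℝ := max (max t T₂) (b - δ₂) with hmdef
        have hmb : m < b := by
          simp only [hmdef, max_lt_iff]
          exact ⟨⟨ht.2, hT₂b⟩, by linarith⟩
        set t₂ : ℝ := (m + b) / 2 with ht₂def
        have hmt₂ : m < t₂ := by simp only [ht₂def]; linarith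
        have ht₂b : t₂ < b := by simp only [ht₂def]; linarith
        have htt₂ : t ≤ t₂ :=
          le_of_lt (lt_of_le_of_lt (le_trans (le_max_left _ _) (le_max_left _ _)) hmt₂)
        have hd1 : ‖p t₂ - q‖ < c / 2 :=
          hT₂ t₂ (lt_of_le_of_lt (le_trans (le_max_right _ _) (le_max_left _ _)) hmt₂)
            (by exact_mod_cast ht₂b)
        have hd2 : dist (σ t₂) q < c / 2 := by
          have hdub : dist t₂ b < δ₂ := by
            rw [Real.dist_eq, abs_sub_lt_iff]
            have : b - δ₂ < t₂ := lt_of_le_of_lt (le_max_right _ _) hmt₂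
            constructor <;> linarith
          have := hδ₂ hdub
          rwa [hσb] at this
        have hd : dist (p t₂) (σ t₂) < c := by
          calc dist (p t₂) (σ t₂) ≤ dist (p t₂) q + dist q (σ t₂) := dist_triangle _ _ _
            _ = ‖p t₂ - q‖ + dist (σ t₂) q := by rw [dist_eq_norm, dist_comm]
            _ < c / 2 + c / 2 := add_lt_add hd1 hd2
            _ = c := by ring
        have hexp : Real.exp (K * (t₂ - t)) ≤ M := by
          apply Real.exp_le_exp.mpr
          apply mul_le_mul_of_nonneg_left _ K.coe_nonneg
          linarith
        have := key t₂ ⟨htt₂, ht₂b⟩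
        have h1 : dist (p t₂) (σ t₂) * Real.exp (K * (t₂ - t)) ≤ c * M := by
          apply mul_le_mul hd.le hexp (Real.exp_pos _).le hc0.le
        have hcM : c * M = η := by
          rw [hcdef]
          field_simp
        linarith
      exact dist_le_zero.mp hdist0
    -- glue p and σ
    set γ : ℝ → E := fun u => if u < b then p u else σ u with hγdef
    have hγp : ∀ u < b, γ u = p u := fun u hu => if_pos hu
    have hγσ : ∀ u ∈ Ioi a₀, γ u = σ u := by
      intro u hu
      by_cases hub : u < b
      · rw [hγp u hub]
        exact heq u ⟨hu, hub⟩
      · exact if_neg hub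
    have hγd : ∀ u : ℝ, α < u → (u : EReal) < ((b + ε : ℝ) : EReal) →
        HasDerivAt γ (H (γ u)) u := by
      intro u huα huβ
      have hubε : u < b + ε := by exact_mod_cast huβ
      by_cases hub : u < b
      · have hpd := hp u huα (by exact_mod_cast hub)
        have hev : γ =ᶠ[nhds u] p :=
          Filter.eventuallyEq_of_mem (Iio_mem_nhds hub) (fun s hs => hγp s hs)
        have := hpd.congr_of_eventuallyEq hev
        rwa [← hγp u hub] at this
      · push_neg at hub
        have hσd' : HasDerivAt σ (H (σ u)) u :=
          hσd u ⟨lt_of_lt_of_le (by linarith) hub, hubε⟩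
        have hev : γ =ᶠ[nhds u] σ :=
          Filter.eventuallyEq_of_mem (Ioi_mem_nhds (lt_of_lt_of_le ha₀b hub))
            (fun s hs => hγσ s hs)
        have := hσd'.congr_of_eventuallyEq hev
        rwa [← hγσ u (lt_of_lt_of_le ha₀b hub)] at this
    exact hmax ((b + ε : ℝ) : EReal) γ (by exact_mod_cast (by linarith : b < b + ε)) hγd
      (fun u huα huβ => hγp u (by exact_mod_cast huβ))
  -- Step 2 : H q = 0
  refine ⟨hβtop, ?_⟩
  subst hβtop
  have hp' : ∀ t : ℝ, α < t → HasDerivAt p (H (p t)) t := fun t ht =>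
    hp t ht (EReal.coe_lt_top t)
  have Hcont : ContinuousAt H q := hH.continuous.continuousAt
  suffices h3 : ∀ ε : ℝ, 0 < ε → ‖H q‖ < 3 * ε by
    by_contra hne
    have h0 : 0 < ‖H q‖ := norm_pos_iff.mpr hne
    have := h3 (‖H q‖ / 3) (by positivity)
    linarith
  intro ε hε
  obtain ⟨δ, hδ0, hδ⟩ := Metric.continuousAt_iff.mp Hcont ε hε
  obtain ⟨T, hTα, _, hT⟩ := hq (min δ ε) (lt_min hδ0 hε)
  have hT' : ∀ t : ℝ, T < t → ‖p t - q‖ < min δ ε := fun t ht =>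
    hT t ht (EReal.coe_lt_top t)
  set t₀ : ℝ := T + 1 with ht₀def
  have huIcc : uIcc t₀ (t₀ + 1) = Icc t₀ (t₀ + 1) := uIcc_of_le (by linarith)
  have hderiv : ∀ t ∈ uIcc t₀ (t₀ + 1), HasDerivAt p (H (p t)) t := by
    intro t ht
    rw [huIcc] at ht
    exact hp' t (by linarith [ht.1])
  have hcont : ContinuousOn (fun t => H (p t)) (uIcc t₀ (t₀ + 1)) := by
    apply continuousOn_of_forall_continuousAt
    intro t ht
    exact hH.continuous.continuousAt.comp (hderiv t ht).differentiableAt.continuousAt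
  have hint : IntervalIntegrable (fun t => H (p t)) MeasureTheory.volume t₀ (t₀ + 1) :=
    hcont.intervalIntegrable
  have hftc : ∫ t in t₀..(t₀ + 1), H (p t) = p (t₀ + 1) - p t₀ :=
    intervalIntegral.integral_eq_sub_of_hasDerivAt hderiv hint
  have hconst : ∫ _ in t₀..(t₀ + 1), H q = H q := by
    rw [intervalIntegral.integral_const]
    simp
  have hbound : ‖p (t₀ + 1) - p t₀ - H q‖ ≤ ε := by
    rw [← hftc, ← hconst, ← intervalIntegral.integral_sub hint intervalIntegrable_const]
    have := intervalIntegral.norm_integral_le_of_norm_le_const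
      (C := ε) (f := fun t => H (p t) - H q) (a := t₀) (b := t₀ + 1) ?_
    · simpa using this
    · intro t ht
      rw [uIoc_of_le (by linarith)] at ht
      have hpt : ‖p t - q‖ < δ := lt_of_lt_of_le (hT' t (by linarith [ht.1])) (min_le_left _ _)
      have := hδ (x := p t) (by rwa [dist_eq_norm])
      rw [dist_eq_norm] at this
      exact this.le
  have h1 : ‖p (t₀ + 1) - q‖ < ε :=
    lt_of_lt_of_le (hT' (t₀ + 1) (by linarith)) (min_le_right _ _)
  have h2 : ‖p t₀ - q‖ < ε :=
    lt_of_lt_of_le (hT' t₀ (by linarith)) (min_le_right _ _)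
  have ht1 : ‖H q‖ ≤ ‖p (t₀ + 1) - p t₀ - H q‖ + ‖p (t₀ + 1) - p t₀‖ := by
    have : H q = (p (t₀ + 1) - p t₀) - (p (t₀ + 1) - p t₀ - H q) := by abel
    calc ‖H q‖ = ‖(p (t₀ + 1) - p t₀) - (p (t₀ + 1) - p t₀ - H q)‖ := by rw [← this]
      _ ≤ ‖p (t₀ + 1) - p t₀‖ + ‖p (t₀ + 1) - p t₀ - H q‖ := norm_sub_le _ _
      _ = _ := by ring
  have ht2 : ‖p (t₀ + 1) - p t₀‖ ≤ ‖p (t₀ + 1) - q‖ + ‖p t₀ - q‖ := by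
    have : p (t₀ + 1) - p t₀ = (p (t₀ + 1) - q) - (p t₀ - q) := by abel
    rw [this]
    exact norm_sub_le _ _
  linarith
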